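/- For ε ∈ ℝ, define g_ε : ℝ² → ℝ² by g_ε(x,y) = (2x + y + ε·sin(2πx), x + y + ε·sin(2πx)). Then there exist ε₀ > 0 and a map p : ℝ → ℝ² that is continuously differentiable on the interval (−ε₀, ε₀), such that p(0) = (1/5, 2/5) and for every ε ∈ (−ε₀, ε₀), g_ε(g_ε(p(ε))) = p(ε) + (2, 1). -/

import Mathlib

/-- The base torus map `g_ε(x,y) = (2x + y + ε sin(2πx), x + y + ε sin(2πx))` lifted to ℝ². -/
noncomputable def gmap (ε : ℝ) (q : ℝ × ℝ) : ℝ × ℝ :=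
  (2 * q.1 + q.2 + ε * Real.sin (2 * Real.pi * q.1),
   q.1 + q.2 + ε * Real.sin (2 * Real.pi * q.1))

namespace Stmt13

/-- forward derivative candidate, block triangular -/
noncomputable def Lfun (c d : ℝ) : ℝ × ℝ × ℝ →L[ℝ] ℝ × ℝ × ℝ where
  toFun z := (z.1, c * z.1 + 4 * z.2.1 + 3 * z.2.2, d * z.1 + 3 * z.2.1 + z.2.2)
  map_add' z w := by ext <;> simp <;> ring
  map_smul' r z := by ext <;> simp <;> ring
  cont := by fun_prop

noncomputable def Mfun (c d : ℝ) : ℝ × ℝ × ℝ →L[ℝ] ℝ × ℝ × ℝ where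
  toFun z := (z.1, (3*z.2.2 - z.2.1 + (c - 3*d)*z.1)/5,
                   (3*z.2.1 - 4*z.2.2 + (4*d - 3*c)*z.1)/5)
  map_add' z w := by ext <;> simp <;> ring
  map_smul' r z := by ext <;> simp <;> ring
  cont := by fun_prop

noncomputable def Leq (c d : ℝ) : (ℝ × ℝ × ℝ) ≃L[ℝ] (ℝ × ℝ × ℝ) :=
  ContinuousLinearEquiv.equivOfInverse (Lfun c d) (Mfun c d)
    (fun z => by ext <;> simp [Lfun, Mfun] <;> ring)
    (fun z => by ext <;> simp [Lfun, Mfun] <;> ring)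

end Stmt13

namespace Stmt13

noncomputable def Phi (z : ℝ × ℝ × ℝ) : ℝ × ℝ × ℝ :=
  (z.1, gmap z.1 (gmap z.1 z.2) - z.2)

lemma contDiff_Phi : ContDiff ℝ 1 Phi := by
  have hs : ContDiff ℝ 1 Real.sin := Real.contDiff_sin.of_le le_top
  unfold Phi gmap
  fun_prop

end Stmt13

namespace Stmt13

noncomputable def apt : ℝ × ℝ × ℝ := ((0:ℝ), ((1/5:ℝ), (2/5:ℝ)))

noncomputable def σ₁ : ℝ := Real.sin (2*Real.pi*(1/5))
noncomputable def σ₂ : ℝ := Real.sin (2*Real.pi*(4/5))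

lemma hasFDerivAt_Phi :
    HasFDerivAt Phi ((Leq (3*σ₁ + σ₂) (2*σ₁ + σ₂) : (ℝ×ℝ×ℝ) ≃L[ℝ] (ℝ×ℝ×ℝ)) :
      (ℝ×ℝ×ℝ) →L[ℝ] (ℝ×ℝ×ℝ)) apt := by
  set πt : (ℝ×ℝ×ℝ) →L[ℝ] ℝ := ContinuousLinearMap.fst ℝ ℝ (ℝ×ℝ) with hπt
  set πx : (ℝ×ℝ×ℝ) →L[ℝ] ℝ :=
    (ContinuousLinearMap.fst ℝ ℝ ℝ).comp (ContinuousLinearMap.snd ℝ ℝ (ℝ×ℝ)) with hπx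
  set πy : (ℝ×ℝ×ℝ) →L[ℝ] ℝ :=
    (ContinuousLinearMap.snd ℝ ℝ ℝ).comp (ContinuousLinearMap.snd ℝ ℝ (ℝ×ℝ)) with hπy
  have ht : HasFDerivAt (fun z : ℝ×ℝ×ℝ => z.1) πt apt := hasFDerivAt_fst
  have hx : HasFDerivAt (fun z : ℝ×ℝ×ℝ => z.2.1) πx apt :=
    hasFDerivAt_fst.comp apt hasFDerivAt_snd
  have hy : HasFDerivAt (fun z : ℝ×ℝ×ℝ => z.2.2) πy apt :=
    hasFDerivAt_snd.comp apt hasFDerivAt_snd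
  -- inner sine
  have harg : HasFDerivAt (fun z : ℝ×ℝ×ℝ => 2*Real.pi*z.2.1) ((2*Real.pi) • πx) apt :=
    hx.const_mul (2*Real.pi)
  have hsin1 : HasFDerivAt (fun z : ℝ×ℝ×ℝ => Real.sin (2*Real.pi*z.2.1))
      (Real.cos (2*Real.pi*(1/5)) • ((2*Real.pi) • πx)) apt :=
    (Real.hasDerivAt_sin (2*Real.pi*(1/5))).comp_hasFDerivAt_of_eq apt harg (by simp [apt])
  have hts1 : HasFDerivAt (fun z : ℝ×ℝ×ℝ => z.1 * Real.sin (2*Real.pi*z.2.1))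
      ((0:ℝ) • (Real.cos (2*Real.pi*(1/5)) • ((2*Real.pi) • πx)) +
        Real.sin (2*Real.pi*(1/5:ℝ)) • πt) apt := ht.mul hsin1
  set S1 : (ℝ×ℝ×ℝ) →L[ℝ] ℝ := (0:ℝ) • (Real.cos (2*Real.pi*(1/5)) • ((2*Real.pi) • πx)) +
        Real.sin (2*Real.pi*(1/5:ℝ)) • πt with hS1
  -- u1, u2
  have hu1 : HasFDerivAt (fun z : ℝ×ℝ×ℝ => 2*z.2.1 + z.2.2 + z.1 * Real.sin (2*Real.pi*z.2.1))
      (((2:ℝ) • πx + πy) + S1) apt := ((hx.const_mul 2).add hy).add hts1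
  have hu2 : HasFDerivAt (fun z : ℝ×ℝ×ℝ => z.2.1 + z.2.2 + z.1 * Real.sin (2*Real.pi*z.2.1))
      ((πx + πy) + S1) apt := (hx.add hy).add hts1
  -- outer sine
  have harg2 : HasFDerivAt
      (fun z : ℝ×ℝ×ℝ => 2*Real.pi*(2*z.2.1 + z.2.2 + z.1 * Real.sin (2*Real.pi*z.2.1)))
      ((2*Real.pi) • (((2:ℝ) • πx + πy) + S1)) apt := hu1.const_mul (2*Real.pi)
  have hpt : (2:ℝ)*Real.pi*(2*(1/5:ℝ) + 2/5 + 0 * Real.sin (2*Real.pi*(1/5:ℝ)))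
      = 2*Real.pi*(4/5) := by norm_num
  have hsinpt : HasDerivAt Real.sin (Real.cos (2*Real.pi*(4/5)))
      ((2:ℝ)*Real.pi*(2*(1/5:ℝ) + 2/5 + 0 * Real.sin (2*Real.pi*(1/5:ℝ)))) := by
    rw [hpt]; exact Real.hasDerivAt_sin _
  have hsin2 : HasFDerivAt
      (fun z : ℝ×ℝ×ℝ => Real.sin (2*Real.pi*(2*z.2.1 + z.2.2 + z.1 * Real.sin (2*Real.pi*z.2.1))))
      (Real.cos (2*Real.pi*(4/5)) • ((2*Real.pi) • (((2:ℝ) • πx + πy) + S1))) apt :=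
    hsinpt.comp_hasFDerivAt_of_eq apt harg2 (by simp [apt])
  have hts2 : HasFDerivAt
      (fun z : ℝ×ℝ×ℝ => z.1 *
        Real.sin (2*Real.pi*(2*z.2.1 + z.2.2 + z.1 * Real.sin (2*Real.pi*z.2.1))))
      ((0:ℝ) • (Real.cos (2*Real.pi*(4/5)) • ((2*Real.pi) • (((2:ℝ) • πx + πy) + S1))) +
        Real.sin (2*Real.pi*(2*(1/5:ℝ) + 2/5 + 0 * Real.sin (2*Real.pi*(1/5:ℝ)))) • πt) apt :=
    ht.mul hsin2
  set S2 : (ℝ×ℝ×ℝ) →L[ℝ] ℝ :=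
    (0:ℝ) • (Real.cos (2*Real.pi*(4/5)) • ((2*Real.pi) • (((2:ℝ) • πx + πy) + S1))) +
        Real.sin (2*Real.pi*(2*(1/5:ℝ) + 2/5 + 0 * Real.sin (2*Real.pi*(1/5:ℝ)))) • πt with hS2
  have hPhi2 : HasFDerivAt (fun z : ℝ×ℝ×ℝ =>
      2*(2*z.2.1 + z.2.2 + z.1 * Real.sin (2*Real.pi*z.2.1)) +
        (z.2.1 + z.2.2 + z.1 * Real.sin (2*Real.pi*z.2.1)) +
        z.1 * Real.sin (2*Real.pi*(2*z.2.1 + z.2.2 + z.1 * Real.sin (2*Real.pi*z.2.1))) - z.2.1)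
      ((((2:ℝ) • (((2:ℝ) • πx + πy) + S1) + ((πx + πy) + S1)) + S2) - πx) apt :=
    (((hu1.const_mul 2).add hu2).add hts2).sub hx
  have hPhi3 : HasFDerivAt (fun z : ℝ×ℝ×ℝ =>
      (2*z.2.1 + z.2.2 + z.1 * Real.sin (2*Real.pi*z.2.1)) +
        (z.2.1 + z.2.2 + z.1 * Real.sin (2*Real.pi*z.2.1)) +
        z.1 * Real.sin (2*Real.pi*(2*z.2.1 + z.2.2 + z.1 * Real.sin (2*Real.pi*z.2.1))) - z.2.2)
      ((((((2:ℝ) • πx + πy) + S1) + ((πx + πy) + S1)) + S2) - πy) apt :=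
    ((hu1.add hu2).add hts2).sub hy
  have hbig := ht.prodMk (hPhi2.prodMk hPhi3)
  have hfun : HasFDerivAt Phi
      (πt.prod (((((2:ℝ) • (((2:ℝ) • πx + πy) + S1) + ((πx + πy) + S1)) + S2) - πx).prod
        ((((((2:ℝ) • πx + πy) + S1) + ((πx + πy) + S1)) + S2) - πy))) apt := by
    exact hbig
  refine hfun.congr_fderiv ?_
  refine ContinuousLinearMap.ext fun v => ?_
  simp only [hS1, hS2, hπt, hπx, hπy, ContinuousLinearMap.prod_apply,
    ContinuousLinearMap.add_apply,
    ContinuousLinearMap.sub_apply, ContinuousLinearMap.smul_apply,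
    ContinuousLinearMap.coe_comp', ContinuousLinearMap.coe_fst', ContinuousLinearMap.coe_snd',
    Function.comp, smul_eq_mul, ContinuousLinearEquiv.coe_coe, Leq,
    ContinuousLinearEquiv.equivOfInverse_apply, Lfun, ContinuousLinearMap.coe_mk',
    LinearMap.coe_mk, AddHom.coe_mk, Prod.mk.injEq]
  norm_num [σ₁, σ₂]
  refine ⟨?_, ?_⟩ <;> ring

end Stmt13

namespace Stmt13

lemma Phi_apt : Phi apt = ((0:ℝ), ((2:ℝ), (1:ℝ))) := by
  simp only [Phi, apt, gmap, Prod.mk.injEq]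
  norm_num [Prod.ext_iff]

end Stmt13

/-- a C¹ family of 2-periodic points of `g_ε` through `(1/5, 2/5)`. -/
theorem stmt_13 :
    ∃ ε₀ > (0 : ℝ), ∃ p : ℝ → ℝ × ℝ,
      ContDiffOn ℝ 1 p (Set.Ioo (-ε₀) ε₀) ∧
      p 0 = (1 / 5, 2 / 5) ∧
      ∀ ε ∈ Set.Ioo (-ε₀) ε₀, gmap ε (gmap ε (p ε)) = p ε + (2, 1) := by
  classical
  have hc : ContDiffAt ℝ 1 Stmt13.Phi Stmt13.apt := Stmt13.contDiff_Phi.contDiffAt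
  have hf' := Stmt13.hasFDerivAt_Phi
  set Ψ : ℝ × ℝ × ℝ → ℝ × ℝ × ℝ := hc.localInverse hf' one_ne_zero with hΨdef
  have hΨc : ContDiffAt ℝ 1 Ψ (Stmt13.Phi Stmt13.apt) := hc.to_localInverse hf' one_ne_zero
  have hright : ∀ᶠ z in nhds (Stmt13.Phi Stmt13.apt), Stmt13.Phi (Ψ z) = z :=
    (hc.hasStrictFDerivAt' hf' one_ne_zero).eventually_right_inverse
  have hΨa : Ψ (Stmt13.Phi Stmt13.apt) = Stmt13.apt := hc.localInverse_apply_image hf' one_ne_zero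
  obtain ⟨u, hu, hΨu⟩ := hΨc.contDiffOn le_rfl (by simp)
  obtain ⟨t, ht, htsub⟩ := Filter.eventually_iff_exists_mem.1 hright
  -- the curve ε ↦ (ε, (2,1))
  set j : ℝ → ℝ × ℝ × ℝ := fun ε => (ε, ((2:ℝ), (1:ℝ))) with hjdef
  have hj : ContDiff ℝ 1 j := contDiff_id.prodMk contDiff_const
  have hj0 : j 0 = Stmt13.Phi Stmt13.apt := by rw [Stmt13.Phi_apt]
  have hmem : (u ∩ t) ∈ nhds (j 0) := by rw [hj0]; exact Filter.inter_mem hu ht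
  have hpre : j ⁻¹' (u ∩ t) ∈ nhds 0 :=
    (hj.continuous.continuousAt).preimage_mem_nhds hmem
  obtain ⟨ε₀, hε₀, hball⟩ := Metric.mem_nhds_iff.1 hpre
  refine ⟨ε₀, hε₀, fun ε => (Ψ (j ε)).2, ?_, ?_, ?_⟩
  · have hIoo : Set.Ioo (-ε₀) ε₀ = Metric.ball (0:ℝ) ε₀ := by
      rw [Real.ball_eq_Ioo]; norm_num
    have hmaps : Set.MapsTo j (Set.Ioo (-ε₀) ε₀) u := fun x hx => by
      have : x ∈ Metric.ball (0:ℝ) ε₀ := by rwa [hIoo] at hx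
      exact (hball this).1
    exact contDiff_snd.comp_contDiffOn ((hΨu.comp (hj.contDiffOn) hmaps))
  · show (Ψ (j 0)).2 = _
    rw [hj0, hΨa]
    simp [Stmt13.apt]
  · intro ε hε
    have hmemt : j ε ∈ t := by
      have : ε ∈ Metric.ball (0:ℝ) ε₀ := by
        rw [Real.ball_eq_Ioo]; simpa using hε
      exact (hball this).2
    have heq : Stmt13.Phi (Ψ (j ε)) = j ε := htsub _ hmemt
    have h1 : (Ψ (j ε)).1 = ε := congrArg Prod.fst heq
    have h2 : gmap (Ψ (j ε)).1 (gmap (Ψ (j ε)).1 (Ψ (j ε)).2) - (Ψ (j ε)).2 = ((2:ℝ), (1:ℝ)) :=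
      congrArg Prod.snd heq
    rw [h1] at h2
    have := sub_eq_iff_eq_add.1 h2
    rw [this]; abel
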